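/- Let H be a κ-monoid, x ∈ H, and (λ_i)_{i∈I} a family of cardinals with |I| ≤ κ and λ_i ≤ κ for all i. Then (Σ_{i∈I} λ_i)·x = Σ_{i∈I} (λ_i·x), where the sum of cardinals Σ_{i∈I} λ_i is assumed to be at most κ. -/

import Mathlib

open scoped Classical

universe u v w

/-- A κ-monoid (Definition 2.1 of the paper), with the index cardinal κ modelled
by an (infinite) index type `ι`.  `base` plays the role of the element `0 ∈ κ`. -/
structure KappaMonoid (ι : Type u) (H : Type v) where
  zero : H
  base : ι
  sum : (ι → H) → H
  /-- (A1) -/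
  sum_single : ∀ x : ι → H, (∀ i, i ≠ base → x i = zero) → sum x = x base
  /-- (A2) -/
  sum_flatten : ∀ (x : ι × ι → H) (π : ι × ι ≃ ι),
    sum (fun i => sum fun j => x (i, j)) = sum fun k => x (π.symm k)

namespace KappaMonoid

variable {ι : Type u} {H : Type v}

/-- The family with value `a` at `i`, `b` at `j`, and `0` elsewhere. -/
noncomputable def pairFam (M : KappaMonoid ι H) (i j : ι) (a b : H) : ι → H :=
  fun k => if k = i then a else if k = j then b else M.zero

/-- The induced binary addition `a + b` on a κ-monoid. -/
noncomputable def add [Nontrivial ι] (M : KappaMonoid ι H) (a b : H) : H :=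
  M.sum (M.pairFam M.base (Classical.choose (exists_ne M.base)) a b)

/-- `α·a`, where the cardinal `α` is realized as the cardinality of `s ⊆ ι`:
the κ-sum of the family equal to `a` on `s` and `0` elsewhere. -/
noncomputable def smulSet (M : KappaMonoid ι H) (s : Set ι) (a : H) : H :=
  M.sum fun i => if i ∈ s then a else M.zero

/-- The κ-sum of the subfamily of `x` supported on `s` (padding by `0`). -/
noncomputable def sumOn (M : KappaMonoid ι H) (s : Set ι) (x : ι → H) : H :=
  M.sum fun i => if i ∈ s then x i else M.zero

end KappaMonoid

section Aux

open Cardinal Set Function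

/-- From equal cardinalities of two sets and of their complements, produce an
equivalence of the ambient types matching the sets. -/
theorem exists_equiv_mem_iff {α : Type u} {β : Type u} (u' : Set α) (v : Set β)
    (h1 : Cardinal.mk u' = Cardinal.mk v)
    (h2 : Cardinal.mk (u'ᶜ : Set α) = Cardinal.mk (vᶜ : Set β)) :
    ∃ π : α ≃ β, ∀ p, π p ∈ v ↔ p ∈ u' := by
  obtain ⟨g₁⟩ := Cardinal.eq.mp h1
  obtain ⟨g₂⟩ := Cardinal.eq.mp h2
  refine ⟨(Equiv.Set.sumCompl u').symm.trans ((g₁.sumCongr g₂).trans (Equiv.Set.sumCompl v)), ?_⟩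
  intro p
  by_cases hp : p ∈ u'
  · simp [Equiv.Set.sumCompl_symm_apply_of_mem hp, (g₁ ⟨p, hp⟩).2, hp]
  · have : ((g₂ ⟨p, hp⟩ : β)) ∈ (vᶜ : Set β) := (g₂ ⟨p, hp⟩).2
    simp [Equiv.Set.sumCompl_symm_apply_of_notMem hp, this, hp]
    exact this

theorem mk_prod_singleton_right {ι : Type u} (s : Set ι) (b : ι) :
    Cardinal.mk ((s ×ˢ ({b} : Set ι)) : Set (ι × ι)) = Cardinal.mk s := by
  rw [Cardinal.mk_congr (Equiv.Set.prod s {b}), Cardinal.mk_prod, Cardinal.lift_id,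
    Cardinal.lift_id, Cardinal.mk_singleton, mul_one]

theorem mk_prod_singleton_left {ι : Type u} (s : Set ι) (b : ι) :
    Cardinal.mk ((({b} : Set ι) ×ˢ s) : Set (ι × ι)) = Cardinal.mk s := by
  rw [Cardinal.mk_congr (Equiv.Set.prod {b} s), Cardinal.mk_prod, Cardinal.lift_id,
    Cardinal.lift_id, Cardinal.mk_singleton, one_mul]

theorem mk_compl_prod_singleton {ι : Type u} [Infinite ι] (s : Set ι) (b : ι) :
    Cardinal.mk (((s ×ˢ ({b} : Set ι))ᶜ : Set (ι × ι))) = Cardinal.mk ι := by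
  apply le_antisymm
  · calc Cardinal.mk (((s ×ˢ ({b} : Set ι))ᶜ : Set (ι × ι))) ≤ Cardinal.mk (ι × ι) :=
        Cardinal.mk_set_le _
    _ = Cardinal.mk ι * Cardinal.mk ι := by simp [Cardinal.mk_prod]
    _ = Cardinal.mk ι := Cardinal.mul_eq_self (Cardinal.aleph0_le_mk ι)
  · obtain ⟨c, hc⟩ := exists_ne b
    have hmem : ∀ a : ι, (a, c) ∈ ((s ×ˢ ({b} : Set ι))ᶜ : Set (ι × ι)) := by
      intro a
      simp only [Set.mem_compl_iff, Set.mem_prod, Set.mem_singleton_iff]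
      rintro ⟨-, h⟩
      exact hc h
    have hinj : Function.Injective
        (fun a : ι => (⟨(a, c), hmem a⟩ : ((s ×ˢ ({b} : Set ι))ᶜ : Set (ι × ι)))) := by
      intro a₁ a₂ h
      have := congrArg Subtype.val h
      exact (Prod.ext_iff.mp this).1
    exact Cardinal.mk_le_of_injective hinj

theorem equiv_prod_self {ι : Type u} [Infinite ι] : Nonempty (ι × ι ≃ ι) :=
  Cardinal.eq.mp (by
    simp only [Cardinal.mk_prod, Cardinal.lift_id]
    exact Cardinal.mul_eq_self (Cardinal.aleph0_le_mk ι))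

end Aux

namespace KappaMonoid

variable {ι : Type u} {H : Type v}

theorem move [Infinite ι] (M : KappaMonoid ι H) (x : H) (s s' : Set ι)
    (π : ι × ι ≃ ι) (hπ : ∀ k, π.symm k ∈ s ×ˢ ({M.base} : Set ι) ↔ k ∈ s') :
    M.smulSet s x = M.smulSet s' x := by
  set v : ι × ι → H := fun p => if p ∈ s ×ˢ ({M.base} : Set ι) then x else M.zero with hv
  have h1 : (fun a => M.sum fun b => v (a, b)) = fun a => if a ∈ s then x else M.zero := by
    funext a
    by_cases ha : a ∈ s
    · have hfam : (fun b => v (a, b)) = fun b => if b = M.base then x else M.zero := by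
        funext b
        simp only [hv]
        refine if_congr ?_ rfl rfl
        rw [Set.mem_prod]
        simp [ha]
      rw [hfam, M.sum_single _ (fun i hi => by simp [hi])]
      simp [ha]
    · have hfam : (fun b => v (a, b)) = fun _ => M.zero := by
        funext b
        simp only [hv]
        rw [if_neg]
        rw [Set.mem_prod]
        simp [ha]
      rw [hfam, M.sum_single _ (fun _ _ => rfl)]
      simp [ha]
  calc M.smulSet s x = M.sum (fun a => M.sum fun b => v (a, b)) := by
        rw [h1]; rfl
    _ = M.sum fun k => v (π.symm k) := M.sum_flatten v π
    _ = M.smulSet s' x := by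
        unfold KappaMonoid.smulSet
        congr 1
        funext k
        simp only [hv]
        exact if_congr (hπ k) rfl rfl

theorem smulSet_congr_mk [Infinite ι] (M : KappaMonoid ι H) (x : H) {s₁ s₂ : Set ι}
    (h : Cardinal.mk s₁ = Cardinal.mk s₂) : M.smulSet s₁ x = M.smulSet s₂ x := by
  obtain ⟨σ⟩ : Nonempty (ι ≃ ι × ι) := ⟨(Classical.choice equiv_prod_self).symm⟩
  set s₃ : Set ι := σ ⁻¹' (s₁ ×ˢ ({M.base} : Set ι)) with hs₃
  have hm1 : M.smulSet s₁ x = M.smulSet s₃ x :=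
    M.move x s₁ s₃ σ.symm (fun k => by simp [hs₃])
  have hker : s₃ᶜ = σ ⁻¹' ((s₁ ×ˢ ({M.base} : Set ι))ᶜ) := by
    rw [hs₃, Set.preimage_compl]
  have hpre : ∀ B : Set (ι × ι), Cardinal.mk (σ ⁻¹' B) = Cardinal.mk B := by
    intro B
    rw [← Equiv.image_symm_eq_preimage σ B]
    exact Cardinal.mk_image_eq σ.symm.injective
  have h2 : Cardinal.mk ((s₂ ×ˢ ({M.base} : Set ι)) : Set (ι × ι)) = Cardinal.mk s₃ := by
    rw [mk_prod_singleton_right, hs₃, hpre, mk_prod_singleton_right, h]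
  have h2c : Cardinal.mk (((s₂ ×ˢ ({M.base} : Set ι))ᶜ : Set (ι × ι))) =
      Cardinal.mk (s₃ᶜ : Set ι) := by
    rw [mk_compl_prod_singleton, hker, hpre, mk_compl_prod_singleton]
  obtain ⟨π, hπ⟩ := exists_equiv_mem_iff (s₂ ×ˢ ({M.base} : Set ι)) s₃ h2 h2c
  have hm2 : M.smulSet s₂ x = M.smulSet s₃ x :=
    M.move x s₂ s₃ π (fun k => by simpa using (hπ (π.symm k)).symm)
  rw [hm1, hm2]

end KappaMonoid

/-- Lemma 2.7(2): `(Σ_{i∈I} λ_i)·x = Σ_{i∈I} λ_i·x`.  The index set `I` (of cardinality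
`≤ κ`) is realized by an embedding `e : I ↪ ι`; the cardinal `λ_i` is realized as the
cardinality of the set `s i ⊆ ι` (hence `λ_i ≤ κ`), and the cardinal `Σ_{i∈I} λ_i ≤ κ`
is realized by a set `t ⊆ ι` with `#t = Σ_i #(s i)`. -/
theorem kappaMonoid_card_sum_smul {ι : Type u} {H : Type v} [Infinite ι]
    (M : KappaMonoid ι H) (x : H) {I : Type u} (e : I ↪ ι)
    (s : I → Set ι) (t : Set ι)
    (ht : Cardinal.mk t = Cardinal.sum fun i => Cardinal.mk (s i)) :
    M.smulSet t x =
      M.sum (Function.extend e (fun i => M.smulSet (s i) x) fun _ => M.zero) := by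
  classical
  set A : Set (ι × ι) := ⋃ i, ({e i} : Set ι) ×ˢ s i with hA
  set u : ι × ι → H := fun p => if p ∈ A then x else M.zero with hu
  have hmemA : ∀ a b, (a, b) ∈ A ↔ ∃ i, e i = a ∧ b ∈ s i := by
    intro a b
    simp only [hA, Set.mem_iUnion, Set.mem_prod, Set.mem_singleton_iff]
    constructor
    · rintro ⟨i, h1, h2⟩; exact ⟨i, h1.symm, h2⟩
    · rintro ⟨i, h1, h2⟩; exact ⟨i, h1.symm, h2⟩
  have h1 : (fun a => M.sum fun b => u (a, b)) =
      Function.extend e (fun i => M.smulSet (s i) x) (fun _ => M.zero) := by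
    funext a
    by_cases ha : ∃ i, e i = a
    · obtain ⟨i, rfl⟩ := ha
      rw [e.injective.extend_apply]
      unfold KappaMonoid.smulSet
      congr 1
      funext b
      simp only [hu]
      refine if_congr ?_ rfl rfl
      rw [hmemA]
      constructor
      · rintro ⟨j, hj1, hj2⟩
        obtain rfl := e.injective hj1
        exact hj2
      · intro hb; exact ⟨i, rfl, hb⟩
    · rw [Function.extend_apply' _ _ _ ha]
      have hfam : (fun b => u (a, b)) = fun _ => M.zero := by
        funext b
        have : (a, b) ∉ A := by
          rw [hmemA]
          rintro ⟨i, hi, -⟩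
          exact ha ⟨i, hi⟩
        simp [hu, this]
      rw [hfam, M.sum_single _ (fun _ _ => rfl)]
  obtain ⟨π₀⟩ : Nonempty (ι × ι ≃ ι) := equiv_prod_self
  have hdisj : Pairwise (Function.onFun Disjoint fun i => ({e i} : Set ι) ×ˢ s i) := by
    intro i j hij
    rw [Function.onFun, Set.disjoint_left]
    rintro ⟨a, b⟩ hp1 hp2
    simp only [Set.mem_prod, Set.mem_singleton_iff] at hp1 hp2
    exact hij (e.injective (hp1.1.symm.trans hp2.1))
  have hAcard : Cardinal.mk A = Cardinal.sum fun i => Cardinal.mk (s i) := by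
    rw [hA, Cardinal.mk_iUnion_eq_sum_mk hdisj]
    congr 1
    funext i
    exact mk_prod_singleton_left (s i) (e i)
  have hpre : Cardinal.mk (π₀.symm ⁻¹' A : Set ι) = Cardinal.mk A := by
    rw [← Equiv.image_symm_eq_preimage π₀.symm A]
    exact Cardinal.mk_image_eq π₀.symm.symm.injective
  calc M.smulSet t x = M.smulSet (π₀.symm ⁻¹' A) x := by
        refine M.smulSet_congr_mk x ?_
        rw [ht, hpre, hAcard]
    _ = M.sum fun k => u (π₀.symm k) := by
        unfold KappaMonoid.smulSet
        congr 1
    _ = M.sum (fun a => M.sum fun b => u (a, b)) := (M.sum_flatten u π₀).symm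
    _ = M.sum (Function.extend e (fun i => M.smulSet (s i) x) fun _ => M.zero) := by
        rw [h1]
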